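/- For every 0 ≤ m ≤ ⌊n/2⌋ and 0 ≤ ℓ ≤ n−2m, the identity f_T^{m,ℓ} = Σ_{S ⊆ {1,…,n}} g_T^{m,ℓ}(S) · f_S holds; that is, for every subset U ⊆ {1,…,n}, f_T^{m,ℓ}(U) = Σ_{S ⊆ {1,…,n}} g_T^{m,ℓ}(S) · (−1)^{|S∩U|} C(|S|, |S∩U|). -/

import Mathlib

open Finset

attribute [local instance] Classical.propDecidable

/-- Stationary distribution of the binary Burnside process. -/
noncomputable def piDist (n : ℕ) (U : Finset ℕ) : ℝ :=
  1 / ((n + 1) * (n.choose U.card))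

/-- Binary Burnside transition matrix entry. -/
noncomputable def Kmat (n : ℕ) (x y : Finset ℕ) : ℝ :=
  (((2 * (n - (x ∪ y).card)).choose (n - (x ∪ y).card) : ℝ) *
      ((2 * ((y \ x).card)).choose ((y \ x).card)) *
      ((2 * ((x \ y).card)).choose ((x \ y).card)) *
      ((2 * ((x ∩ y).card)).choose ((x ∩ y).card))) /
    (4 ^ n * (((n - (x ∪ y).card) + (y \ x).card).choose (n - (x ∪ y).card)) *
      (((x \ y).card + (x ∩ y).card).choose ((x \ y).card)))

/-- Action of K_n on functions. -/
noncomputable def Kop (n : ℕ) (f : Finset ℕ → ℝ) : Finset ℕ → ℝ :=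
  fun x => ∑ y ∈ (Finset.Icc 1 n).powerset, Kmat n x y * f y

/-- s-step transition probabilities. -/
noncomputable def Kpow (n : ℕ) : ℕ → Finset ℕ → Finset ℕ → ℝ
  | 0 => fun x y => if x = y then 1 else 0
  | s + 1 => fun x y => ∑ z ∈ (Finset.Icc 1 n).powerset, Kmat n x z * Kpow n s z y

/-- Chi-square distance to stationarity after s steps, started at x. -/
noncomputable def chiSq (n s : ℕ) (x : Finset ℕ) : ℝ :=
  ∑ y ∈ (Finset.Icc 1 n).powerset, (Kpow n s x y - piDist n y) ^ 2 / piDist n y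

/-- Eigenvalues. -/
noncomputable def betaEV (k : ℕ) : ℝ := (((2 * k).choose k : ℝ)) ^ 2 / 16 ^ k

/-- The eigenvectors f_S of Diaconis–Lin–Ram. -/
noncomputable def fSvec (S : Finset ℕ) : Finset ℕ → ℝ :=
  fun U => (-1 : ℝ) ^ ((S ∩ U).card) * (S.card.choose ((S ∩ U).card))

/-- Inner product with respect to π. -/
noncomputable def innerPi (n : ℕ) (f g : Finset ℕ → ℝ) : ℝ :=
  ∑ U ∈ (Finset.Icc 1 n).powerset, f U * g U * piDist n U

/-- The scalars T_{m,n}^{(ℓ)}(i). -/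
noncomputable def Tcoef (n m ℓ i : ℕ) : ℝ :=
  ∑ j ∈ Finset.range (i + 1),
    if j ≤ ℓ then
      (-1 : ℝ) ^ (m + j) * ((2 * m + ℓ).choose (m + j)) * (i.choose j) *
        ((n - 2 * m - i).choose (ℓ - j))
    else 0

/-- The vector g_T^{m,i} associated to the column reading tableau. -/
noncomputable def gT (n m i : ℕ) : Finset ℕ → ℝ := fun U =>
  if (∀ r ∈ Finset.Icc 1 m, ((2 * r - 1 ∈ U) ↔ ¬(2 * r ∈ U))) ∧
      (U ∩ Finset.Icc (2 * m + 1) n).card = i then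
    (-1 : ℝ) ^ ((U ∩ (Finset.range m).image (fun r => 2 * r + 1)).card)
  else 0

/-- The vector f_T^{m,ℓ} associated to the column reading tableau. -/
noncomputable def fT (n m ℓ : ℕ) : Finset ℕ → ℝ :=
  fun U => ∑ i ∈ Finset.range (n - 2 * m + 1), Tcoef n m ℓ i * gT n m i U

/-- Action of the adjacent transposition s_t (switching t and t+1) on functions. -/
noncomputable def sOp (t : ℕ) (f : Finset ℕ → ℝ) : Finset ℕ → ℝ :=
  fun U => f (U.image (Equiv.swap t (t + 1)))

/-- The factor s_t − 1/(t − 2r + 2) (r is the 1-indexed position in the second row). -/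
noncomputable def tauFactor (r t : ℕ) (f : Finset ℕ → ℝ) : Finset ℕ → ℝ :=
  fun U => sOp t f U - ((t : ℝ) - 2 * r + 2)⁻¹ * f U

/-- Composition (s_{2r+k-1} − ⋯)⋯(s_{2r} − 1/2) of k successive factors. -/
noncomputable def tauComp (r : ℕ) : ℕ → (Finset ℕ → ℝ) → (Finset ℕ → ℝ)
  | 0 => id
  | k + 1 => fun f => tauFactor r (2 * r + k) (tauComp r k f)

/-- τ_Q^{(r)} τ_Q^{(r+1)} ⋯ for the remaining second-row entries. -/
noncomputable def tauQAux : ℕ → List ℕ → (Finset ℕ → ℝ) → (Finset ℕ → ℝ)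
  | _, [] => id
  | r, a :: rest => fun f => tauComp r (a - 2 * r) (tauQAux (r + 1) rest f)

/-- The operator τ_Q for a tableau Q encoded by its list of second-row entries. -/
noncomputable def tauQ (Q : List ℕ) : (Finset ℕ → ℝ) → (Finset ℕ → ℝ) := tauQAux 1 Q

/-- A standard Young tableau of shape (n − Q.length, Q.length), encoded by the strictly
increasing list of second-row entries, each entry a_r satisfying 2r ≤ a_r ≤ n. -/
def IsSYT (n : ℕ) (Q : List ℕ) : Prop :=
  Q.Chain' (· < ·) ∧ (∀ x ∈ Q, x ≤ n) ∧ ∀ r < Q.length, 2 * (r + 1) ≤ Q.getD r 0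

/-- The eigenvectors f_Q^{m,ℓ} (here m = Q.length). -/
noncomputable def fQvec (n : ℕ) (Q : List ℕ) (ℓ : ℕ) : Finset ℕ → ℝ :=
  tauQ Q (fT n Q.length ℓ)

/-- The orthogonal vectors g_Q^{m,i} (here m = Q.length). -/
noncomputable def gQvec (n : ℕ) (Q : List ℕ) (i : ℕ) : Finset ℕ → ℝ :=
  tauQ Q (gT n Q.length i)

/-- The constant γ_Q. -/
noncomputable def gammaQ (Q : List ℕ) : ℝ :=
  ∏ r ∈ Finset.range Q.length, ∏ c ∈ Finset.Icc 2 (Q.getD r 0 - 2 * (r + 1) + 1),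
    ((c : ℝ) ^ 2 - 1) / (c : ℝ) ^ 2

/-- The Murphy (Jucys–Murphy) operator M_r acting on functions. -/
noncomputable def murphy (r : ℕ) (f : Finset ℕ → ℝ) : Finset ℕ → ℝ :=
  fun U => ∑ i ∈ Finset.Icc 1 (r - 1), f (U.image (Equiv.swap i r))

/-- The state space as a finite type. -/
noncomputable def transpEndo (n a b : ℕ) :
    Module.End ℝ ((↥((Finset.Icc 1 n).powerset)) → ℝ) where
  toFun f U := f (if h : U.1.image (Equiv.swap a b) ∈ (Finset.Icc 1 n).powerset
    then ⟨U.1.image (Equiv.swap a b), h⟩ else U)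
  map_add' f g := rfl
  map_smul' c f := rfl

noncomputable def murphyEndo (n r : ℕ) :
    Module.End ℝ ((↥((Finset.Icc 1 n).powerset)) → ℝ) :=
  ∑ i ∈ Finset.Icc 1 (r - 1), transpEndo n i r

noncomputable def KEndo (n : ℕ) :
    Module.End ℝ ((↥((Finset.Icc 1 n).powerset)) → ℝ) where
  toFun f x := ∑ y : ↥((Finset.Icc 1 n).powerset), Kmat n x.1 y.1 * f y
  map_add' f g := by funext x; simp [mul_add, Finset.sum_add_distrib]
  map_smul' c f := by funext x; simp [Finset.mul_sum, mul_left_comm]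



-- Auxiliary lemmas

lemma burnAux_vanish (u v : ℕ → ℕ) (s : Finset ℕ) (F : ℕ → ℝ) (r0 : ℕ) (hr0 : r0 ∈ s)
    (huv : u r0 = v r0) :
    ∑ T ∈ s.powerset,
      (-1 : ℝ) ^ T.card * F (∑ r ∈ s, if r ∈ T then u r else v r) = 0 := by
  classical
  have h0 : r0 ∉ s.erase r0 := Finset.notMem_erase _ _
  have hins : insert r0 (s.erase r0) = s := Finset.insert_erase hr0
  rw [← hins, Finset.sum_powerset_insert h0]
  have key : ∀ T ∈ (s.erase r0).powerset,
      (-1 : ℝ) ^ (insert r0 T).card *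
        F (∑ r ∈ insert r0 (s.erase r0), if r ∈ insert r0 T then u r else v r)
      = - ((-1 : ℝ) ^ T.card *
        F (∑ r ∈ insert r0 (s.erase r0), if r ∈ T then u r else v r)) := by
    intro T hT
    have hr0T : r0 ∉ T := fun h => h0 (Finset.mem_powerset.1 hT h)
    have hc : (insert r0 T).card = T.card + 1 := Finset.card_insert_of_notMem hr0T
    have hsum : (∑ r ∈ insert r0 (s.erase r0), if r ∈ insert r0 T then u r else v r)
        = ∑ r ∈ insert r0 (s.erase r0), if r ∈ T then u r else v r := by
      apply Finset.sum_congr rfl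
      intro r _
      by_cases hrr : r = r0
      · subst hrr; simp [hr0T, huv]
      · simp [Finset.mem_insert, hrr]
    rw [hc, hsum, pow_succ]
    ring
  rw [Finset.sum_congr rfl key, Finset.sum_neg_distrib]
  ring

lemma burnAux_pair (u v : ℕ → ℕ) :
    ∀ (m N b : ℕ), (∀ r < m, u r + v r = 1) →
    ∑ T ∈ (Finset.range m).powerset,
      (-1 : ℝ) ^ (T.card + (∑ r ∈ Finset.range m, if r ∈ T then u r else v r) + b) *
        (N.choose ((∑ r ∈ Finset.range m, if r ∈ T then u r else v r) + b)) =
    (-1 : ℝ) ^ ((∑ r ∈ Finset.range m, v r) + b) * ((N + m).choose (b + m)) := by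
  intro m
  induction m with
  | zero => intro N b _; simp
  | succ m ih =>
    intro N b h
    have hm : m ∉ Finset.range m := by simp
    rw [Finset.range_add_one, Finset.sum_powerset_insert hm, ← Finset.sum_add_distrib]
    have key : ∀ T ∈ (Finset.range m).powerset,
        ((-1 : ℝ) ^ (T.card + (∑ r ∈ insert m (Finset.range m), if r ∈ T then u r else v r) + b) *
          (N.choose ((∑ r ∈ insert m (Finset.range m), if r ∈ T then u r else v r) + b)))
        + ((-1 : ℝ) ^ ((insert m T).card +
            (∑ r ∈ insert m (Finset.range m), if r ∈ insert m T then u r else v r) + b) *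
          (N.choose ((∑ r ∈ insert m (Finset.range m), if r ∈ insert m T then u r else v r) + b)))
        = (-1 : ℝ) ^ (v m + 1) *
          ((-1 : ℝ) ^ (T.card + (∑ r ∈ Finset.range m, if r ∈ T then u r else v r) + (b+1)) *
            ((N+1).choose ((∑ r ∈ Finset.range m, if r ∈ T then u r else v r) + (b+1)))) := by
      intro T hT
      have hmT : m ∉ T := fun hc => hm (Finset.mem_powerset.1 hT hc)
      set c := ∑ r ∈ Finset.range m, if r ∈ T then u r else v r with hcdef
      have h1 : (∑ r ∈ insert m (Finset.range m), if r ∈ T then u r else v r) = c + v m := by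
        rw [Finset.sum_insert hm, if_neg hmT]; ring
      have h2 : (∑ r ∈ insert m (Finset.range m), if r ∈ insert m T then u r else v r)
          = c + u m := by
        rw [Finset.sum_insert hm, if_pos (Finset.mem_insert_self m T)]
        rw [add_comm]
        congr 1
        apply Finset.sum_congr rfl
        intro r hr
        have : r ≠ m := Nat.ne_of_lt (Finset.mem_range.1 hr)
        simp [Finset.mem_insert, this]
      have h3 : (insert m T).card = T.card + 1 := Finset.card_insert_of_notMem hmT
      rw [h1, h2, h3]
      have hch : ((N.choose (c + b)) : ℝ) + (N.choose (c + b + 1)) = (N+1).choose (c + b + 1) := by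
        rw [Nat.choose_succ_succ (n := N) (k := c + b)]
        push_cast; ring
      have e1 : c + (b + 1) = c + b + 1 := by omega
      have huv : u m + v m = 1 := h m (Nat.lt_succ_self m)
      rcases (by omega : (u m = 0 ∧ v m = 1) ∨ (u m = 1 ∧ v m = 0)) with ⟨h4, h5⟩ | ⟨h4, h5⟩ <;>
        rw [h4, h5]
      · have e2 : c + 1 + b = c + b + 1 := by omega
        rw [e1, e2, ← hch]
        simp only [pow_add, pow_succ, pow_zero, pow_one, one_mul, add_zero]
        ring
      · have e2 : c + 0 = c := by omega
        rw [e1, e2, ← hch]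
        simp only [pow_add, pow_succ, pow_zero, pow_one, one_mul, add_zero]
        ring
    rw [Finset.sum_congr rfl key, ← Finset.mul_sum,
      ih (N+1) (b+1) (fun r hr => h r (Nat.lt_succ_of_lt hr))]
    rw [Finset.sum_insert hm]
    have e3 : N + 1 + m = N + (m + 1) := by omega
    have e4 : b + 1 + m = b + (m + 1) := by omega
    rw [e3, e4]
    simp only [pow_add, pow_succ, pow_zero, pow_one, one_mul]
    ring


lemma burnAux_fiber_card (D W : Finset ℕ) (hW : W ⊆ D) (ℓ j : ℕ) (hj : j ≤ ℓ) :
    ((D.powersetCard ℓ).filter (fun R => (R ∩ W).card = j)).card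
      = W.card.choose j * (D.card - W.card).choose (ℓ - j) := by
  classical
  rw [← Finset.card_powersetCard j W, ← Finset.card_sdiff_of_subset hW,
    ← Finset.card_powersetCard (ℓ - j) (D \ W), ← Finset.card_product]
  apply Finset.card_nbij' (fun R => (R ∩ W, R \ W)) (fun p => p.1 ∪ p.2)
  · intro R hR
    rw [Finset.mem_coe, Finset.mem_filter, Finset.mem_powersetCard] at hR
    obtain ⟨⟨hRD, hRc⟩, hRj⟩ := hR
    rw [Finset.mem_coe, Finset.mem_product, Finset.mem_powersetCard, Finset.mem_powersetCard]
    have hcc : (R ∩ W).card + (R \ W).card = R.card := Finset.card_inter_add_card_sdiff R W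
    exact ⟨⟨Finset.inter_subset_right, hRj⟩, Finset.sdiff_subset_sdiff hRD le_rfl, by show (R \ W).card = ℓ - j; omega⟩
  · intro p hp
    rw [Finset.mem_coe, Finset.mem_product, Finset.mem_powersetCard, Finset.mem_powersetCard] at hp
    obtain ⟨⟨h1, h2⟩, h3, h4⟩ := hp
    have hdisj : Disjoint p.1 p.2 := by
      refine Finset.disjoint_left.2 fun x hx1 hx2 => ?_
      exact (Finset.mem_sdiff.1 (h3 hx2)).2 (h1 hx1)
    have hiw : (p.1 ∪ p.2) ∩ W = p.1 := by
      ext x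
      simp only [Finset.mem_inter, Finset.mem_union]
      constructor
      · rintro ⟨hx1 | hx2, hxW⟩
        · exact hx1
        · exact absurd hxW (Finset.mem_sdiff.1 (h3 hx2)).2
      · intro hx; exact ⟨Or.inl hx, h1 hx⟩
    rw [Finset.mem_coe, Finset.mem_filter, Finset.mem_powersetCard]
    refine ⟨⟨Finset.union_subset (h1.trans hW) (h3.trans Finset.sdiff_subset), ?_⟩, by rw [hiw, h2]⟩
    rw [Finset.card_union_of_disjoint hdisj, h2, h4]
    omega
  · intro R hR
    rw [Finset.mem_coe, Finset.mem_filter, Finset.mem_powersetCard] at hR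
    ext x
    simp only [Finset.mem_union, Finset.mem_inter, Finset.mem_sdiff]
    tauto
  · intro p hp
    rw [Finset.mem_coe, Finset.mem_product, Finset.mem_powersetCard, Finset.mem_powersetCard] at hp
    obtain ⟨⟨h1, h2⟩, h3, h4⟩ := hp
    have hiw : (p.1 ∪ p.2) ∩ W = p.1 := by
      ext x
      simp only [Finset.mem_inter, Finset.mem_union]
      constructor
      · rintro ⟨hx1 | hx2, hxW⟩
        · exact hx1
        · exact absurd hxW (Finset.mem_sdiff.1 (h3 hx2)).2
      · intro hx; exact ⟨Or.inl hx, h1 hx⟩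
    have hsd : (p.1 ∪ p.2) \ W = p.2 := by
      ext x
      simp only [Finset.mem_sdiff, Finset.mem_union]
      constructor
      · rintro ⟨hx1 | hx2, hxW⟩
        · exact absurd (h1 hx1) hxW
        · exact hx2
      · intro hx; exact ⟨Or.inr hx, (Finset.mem_sdiff.1 (h3 hx)).2⟩
    show ((p.1 ∪ p.2) ∩ W, (p.1 ∪ p.2) \ W) = p
    rw [hiw, hsd]

section PTfacts

variable (n m : ℕ) (T R : Finset ℕ)

lemma mem_PT (x : ℕ) :
    x ∈ (Finset.range m).image (fun r => if r ∈ T then 2*r+1 else 2*r+2) ↔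
    ∃ r, r < m ∧ ((r ∈ T ∧ x = 2*r+1) ∨ (r ∉ T ∧ x = 2*r+2)) := by
  simp only [Finset.mem_image, Finset.mem_range]
  constructor
  · rintro ⟨r, hr, heq⟩
    refine ⟨r, hr, ?_⟩
    by_cases h : r ∈ T
    · left; exact ⟨h, by rw [← heq, if_pos h]⟩
    · right; exact ⟨h, by rw [← heq, if_neg h]⟩
  · rintro ⟨r, hr, ⟨h1, rfl⟩ | ⟨h1, rfl⟩⟩
    · exact ⟨r, hr, if_pos h1⟩
    · exact ⟨r, hr, if_neg h1⟩

lemma PT_bound : ∀ x ∈ (Finset.range m).image (fun r => if r ∈ T then 2*r+1 else 2*r+2),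
    1 ≤ x ∧ x ≤ 2*m := by
  intro x hx
  obtain ⟨r, hr, h⟩ := (mem_PT m T x).1 hx
  rcases h with ⟨_, rfl⟩ | ⟨_, rfl⟩ <;> omega

variable (hRD : R ⊆ Finset.Icc (2*m+1) n)

include hRD

lemma PT_cap :
    ((Finset.range m).image (fun r => if r ∈ T then 2*r+1 else 2*r+2) ∪ R)
      ∩ Finset.Icc (2*m+1) n = R := by
  ext x
  simp only [Finset.mem_inter, Finset.mem_union, Finset.mem_Icc]
  constructor
  · rintro ⟨hx1 | hx2, hx3⟩
    · exact absurd (PT_bound m T x hx1) (by omega)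
    · exact hx2
  · intro hx
    exact ⟨Or.inr hx, Finset.mem_Icc.1 (hRD hx)⟩

lemma PT_pair : ∀ r ∈ Finset.Icc 1 m,
    ((2*r - 1 ∈ (Finset.range m).image (fun r => if r ∈ T then 2*r+1 else 2*r+2) ∪ R) ↔
      ¬(2*r ∈ (Finset.range m).image (fun r => if r ∈ T then 2*r+1 else 2*r+2) ∪ R)) := by
  intro r hr
  rw [Finset.mem_Icc] at hr
  have hRb : ∀ x ∈ R, 2*m+1 ≤ x := fun x hx => (Finset.mem_Icc.1 (hRD hx)).1
  have hR1 : 2*r-1 ∉ R := fun h => by have := hRb _ h; omega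
  have hR2 : 2*r ∉ R := fun h => by have := hRb _ h; omega
  have h1 : 2*r-1 ∈ (Finset.range m).image (fun r => if r ∈ T then 2*r+1 else 2*r+2) ∪ R
      ↔ r - 1 ∈ T := by
    rw [Finset.mem_union, mem_PT]
    constructor
    · rintro (⟨r', hr', ⟨h', he⟩ | ⟨h', he⟩⟩ | h)
      · have : r' = r - 1 := by omega
        rwa [← this]
      · omega
      · exact absurd h hR1
    · intro h
      exact Or.inl ⟨r - 1, by omega, Or.inl ⟨h, by omega⟩⟩
  have h2 : 2*r ∈ (Finset.range m).image (fun r => if r ∈ T then 2*r+1 else 2*r+2) ∪ R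
      ↔ r - 1 ∉ T := by
    rw [Finset.mem_union, mem_PT]
    constructor
    · rintro (⟨r', hr', ⟨h', he⟩ | ⟨h', he⟩⟩ | h)
      · omega
      · have : r' = r - 1 := by omega
        rwa [← this]
      · exact absurd h hR2
    · intro h
      exact Or.inl ⟨r - 1, by omega, Or.inr ⟨h, by omega⟩⟩
  rw [h1, h2]; tauto

variable (hT : T ⊆ Finset.range m)

include hT

lemma PT_filter :
    (Finset.range m).filter (fun r => 2*r+1 ∈
      (Finset.range m).image (fun r => if r ∈ T then 2*r+1 else 2*r+2) ∪ R) = T := by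
  have hRb : ∀ x ∈ R, 2*m+1 ≤ x := fun x hx => (Finset.mem_Icc.1 (hRD hx)).1
  ext r
  simp only [Finset.mem_filter, Finset.mem_range]
  constructor
  · rintro ⟨hr, hmem⟩
    rcases Finset.mem_union.1 hmem with h | h
    · obtain ⟨r', hr', ⟨h', he⟩ | ⟨h', he⟩⟩ := (mem_PT m T _).1 h
      · have : r' = r := by omega
        rwa [← this]
      · omega
    · have := hRb _ h; omega
  · intro hr
    have hrm : r < m := Finset.mem_range.1 (hT hr)
    exact ⟨hrm, Finset.mem_union_left _ ((mem_PT m T _).2 ⟨r, hrm, Or.inl ⟨hr, rfl⟩⟩)⟩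

omit hT

lemma PT_disjoint :
    Disjoint ((Finset.range m).image (fun r => if r ∈ T then 2*r+1 else 2*r+2)) R := by
  have hRb : ∀ x ∈ R, 2*m+1 ≤ x := fun x hx => (Finset.mem_Icc.1 (hRD hx)).1
  refine Finset.disjoint_left.2 fun x hx1 hx2 => ?_
  have := PT_bound m T x hx1
  have := hRb x hx2
  omega

omit hRD

lemma PT_card :
    ((Finset.range m).image (fun r => if r ∈ T then 2*r+1 else 2*r+2)).card = m := by
  rw [Finset.card_image_of_injOn, Finset.card_range]
  intro a ha b hb heq
  simp only at heq
  split_ifs at heq <;> omega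

include hRD

lemma PT_union_card :
    (((Finset.range m).image (fun r => if r ∈ T then 2*r+1 else 2*r+2)) ∪ R).card
      = m + R.card := by
  rw [Finset.card_union_of_disjoint (PT_disjoint n m T R hRD), PT_card]

lemma PT_cap_odd :
    ((((Finset.range m).image (fun r => if r ∈ T then 2*r+1 else 2*r+2)) ∪ R)
      ∩ (Finset.range m).image (fun r => 2*r+1)).card = (T ∩ Finset.range m).card := by
  have hRb : ∀ x ∈ R, 2*m+1 ≤ x := fun x hx => (Finset.mem_Icc.1 (hRD hx)).1
  have heq : (((Finset.range m).image (fun r => if r ∈ T then 2*r+1 else 2*r+2)) ∪ R)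
      ∩ (Finset.range m).image (fun r => 2*r+1)
      = (T ∩ Finset.range m).image (fun r => 2*r+1) := by
    ext x
    simp only [Finset.mem_inter, Finset.mem_image, Finset.mem_range, Finset.mem_union]
    constructor
    · rintro ⟨hx1 | hx2, r, hr, rfl⟩
      · obtain ⟨r', hr', he⟩ := hx1
        split_ifs at he with h'
        · have hrr : r' = r := by omega
          exact ⟨r, ⟨hrr ▸ h', hr⟩, rfl⟩
        · omega
      · have := hRb _ hx2; omega
    · rintro ⟨r, ⟨hrT, hrm⟩, rfl⟩
      exact ⟨Or.inl ⟨r, hrm, by simp [hrT]⟩, r, hrm, rfl⟩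
  rw [heq, Finset.card_image_of_injOn]
  intro a _ b _ h
  simp only at h
  omega

lemma PT_cap_U (U : Finset ℕ) :
    ((((Finset.range m).image (fun r => if r ∈ T then 2*r+1 else 2*r+2)) ∪ R) ∩ U).card
      = (∑ r ∈ Finset.range m,
          if r ∈ T then (if 2*r+1 ∈ U then 1 else 0) else (if 2*r+2 ∈ U then 1 else 0))
        + (R ∩ U).card := by
  classical
  set PT := (Finset.range m).image (fun r => if r ∈ T then 2*r+1 else 2*r+2) with hPT
  rw [Finset.union_inter_distrib_right]
  rw [Finset.card_union_of_disjoint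
    (Disjoint.mono Finset.inter_subset_left Finset.inter_subset_left
      (PT_disjoint n m T R hRD))]
  congr 1
  have heq : PT ∩ U = ((Finset.range m).filter
      (fun r => (if r ∈ T then 2*r+1 else 2*r+2) ∈ U)).image
      (fun r => if r ∈ T then 2*r+1 else 2*r+2) := by
    ext x
    simp only [Finset.mem_inter, Finset.mem_image, Finset.mem_filter, Finset.mem_range, hPT]
    constructor
    · rintro ⟨⟨r, hr, rfl⟩, hxU⟩
      exact ⟨r, ⟨hr, hxU⟩, rfl⟩
    · rintro ⟨r, ⟨hr, hrU⟩, rfl⟩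
      exact ⟨⟨r, hr, rfl⟩, hrU⟩
  rw [heq, Finset.card_image_of_injOn, Finset.card_filter]
  · apply Finset.sum_congr rfl
    intro r _
    by_cases h : r ∈ T <;> simp [h]
  · intro a ha b hb h
    simp only at h
    split_ifs at h <;> omega

end PTfacts

lemma burnAux_reindex (n m ℓ : ℕ) (hm : 2 * m ≤ n) (U : Finset ℕ) :
    ∑ S ∈ (Finset.Icc 1 n).powerset, gT n m ℓ S * fSvec S U =
    ∑ T ∈ (Finset.range m).powerset, ∑ R ∈ (Finset.Icc (2*m+1) n).powersetCard ℓ,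
      (-1 : ℝ) ^ T.card *
        ((-1 : ℝ) ^ ((∑ r ∈ Finset.range m,
              if r ∈ T then (if 2*r+1 ∈ U then 1 else 0) else (if 2*r+2 ∈ U then 1 else 0))
            + (R ∩ U).card) *
          ((m + ℓ).choose ((∑ r ∈ Finset.range m,
              if r ∈ T then (if 2*r+1 ∈ U then 1 else 0) else (if 2*r+2 ∈ U then 1 else 0))
            + (R ∩ U).card))) := by
  classical
  have hrestrict : ∑ S ∈ (Finset.Icc 1 n).powerset, gT n m ℓ S * fSvec S U
      = ∑ S ∈ (Finset.Icc 1 n).powerset.filter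
          (fun S => (∀ r ∈ Finset.Icc 1 m, ((2 * r - 1 ∈ S) ↔ ¬(2 * r ∈ S))) ∧
            (S ∩ Finset.Icc (2*m+1) n).card = ℓ), gT n m ℓ S * fSvec S U := by
    rw [Finset.sum_filter_of_ne]
    intro S _ hne
    by_contra hc
    exact hne (by rw [gT, if_neg hc, zero_mul])
  rw [hrestrict, ← Finset.sum_product']
  refine (Finset.sum_nbij'
    (fun p => ((Finset.range m).image (fun r => if r ∈ p.1 then 2*r+1 else 2*r+2)) ∪ p.2)
    (fun S => ((Finset.range m).filter (fun r => 2*r+1 ∈ S), S ∩ Finset.Icc (2*m+1) n))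
    ?_ ?_ ?_ ?_ ?_).symm
  · -- maps into the filter
    rintro ⟨T, R⟩ hp
    rw [Finset.mem_product, Finset.mem_powerset, Finset.mem_powersetCard] at hp
    obtain ⟨hT, hRD, hRc⟩ := hp
    rw [Finset.mem_filter, Finset.mem_powerset]
    refine ⟨?_, PT_pair n m T R hRD, by rw [PT_cap n m T R hRD, hRc]⟩
    intro x hx
    rcases Finset.mem_union.1 hx with h | h
    · have := PT_bound m T x h
      exact Finset.mem_Icc.2 (by omega)
    · exact Finset.Icc_subset_Icc (by omega) le_rfl (hRD h)
  · -- inverse maps into the product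
    intro S hS
    rw [Finset.mem_filter, Finset.mem_powerset] at hS
    obtain ⟨hSsub, _, hScard⟩ := hS
    rw [Finset.mem_product, Finset.mem_powerset, Finset.mem_powersetCard]
    exact ⟨Finset.filter_subset _ _, Finset.inter_subset_right, hScard⟩
  · -- left inverse
    rintro ⟨T, R⟩ hp
    rw [Finset.mem_product, Finset.mem_powerset, Finset.mem_powersetCard] at hp
    obtain ⟨hT, hRD, hRc⟩ := hp
    simp only
    rw [PT_filter n m T R hRD hT, PT_cap n m T R hRD]
  · -- right inverse
    intro S hS
    rw [Finset.mem_filter, Finset.mem_powerset] at hS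
    obtain ⟨hSsub, hpc, hScard⟩ := hS
    simp only
    ext x
    rw [Finset.mem_union, mem_PT]
    constructor
    · rintro (⟨r, hrm, ⟨h', rfl⟩ | ⟨h', rfl⟩⟩ | h)
      · exact (Finset.mem_filter.1 h').2
      · have h1 : 2*r+1 ∉ S := fun hc => h' (Finset.mem_filter.2 ⟨Finset.mem_range.2 hrm, hc⟩)
        have hiff := hpc (r+1) (Finset.mem_Icc.2 (by omega))
        rw [show 2*(r+1) - 1 = 2*r+1 from by omega, show 2*(r+1) = 2*r+2 from by omega] at hiff
        tauto
      · exact (Finset.mem_inter.1 h).1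
    · intro hxS
      have hxb := Finset.mem_Icc.1 (hSsub hxS)
      by_cases hbig : 2*m+1 ≤ x
      · exact Or.inr (Finset.mem_inter.2 ⟨hxS, Finset.mem_Icc.2 ⟨hbig, hxb.2⟩⟩)
      · obtain ⟨r, hrm, hcase⟩ : ∃ r, r < m ∧ (x = 2*r+1 ∨ x = 2*r+2) :=
          ⟨(x-1)/2, by omega, by omega⟩
        rcases hcase with rfl | rfl
        · exact Or.inl ⟨r, hrm, Or.inl
            ⟨Finset.mem_filter.2 ⟨Finset.mem_range.2 hrm, hxS⟩, rfl⟩⟩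
        · have hiff := hpc (r+1) (Finset.mem_Icc.2 (by omega))
          rw [show 2*(r+1) - 1 = 2*r+1 from by omega, show 2*(r+1) = 2*r+2 from by omega] at hiff
          have h1 : 2*r+1 ∉ S := by tauto
          exact Or.inl ⟨r, hrm, Or.inr
            ⟨fun hc => h1 (Finset.mem_filter.1 hc).2, rfl⟩⟩
  · -- values agree
    rintro ⟨T, R⟩ hp
    rw [Finset.mem_product, Finset.mem_powerset, Finset.mem_powersetCard] at hp
    obtain ⟨hT, hRD, hRc⟩ := hp
    simp only
    have hcond : (∀ r ∈ Finset.Icc 1 m, ((2 * r - 1 ∈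
          (Finset.range m).image (fun r => if r ∈ T then 2*r+1 else 2*r+2) ∪ R) ↔
        ¬(2 * r ∈ (Finset.range m).image (fun r => if r ∈ T then 2*r+1 else 2*r+2) ∪ R))) ∧
        (((Finset.range m).image (fun r => if r ∈ T then 2*r+1 else 2*r+2) ∪ R)
          ∩ Finset.Icc (2*m+1) n).card = ℓ :=
      ⟨PT_pair n m T R hRD, by rw [PT_cap n m T R hRD, hRc]⟩
    rw [gT, fSvec, if_pos (by exact_mod_cast hcond)]
    have h1 := PT_cap_odd n m T R hRD
    have h2 := PT_cap_U n m T R hRD U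
    have h3 := PT_union_card n m T R hRD
    rw [h1, h2, h3, hRc, Finset.inter_eq_left.2 hT]


lemma cap_odd_card (m : ℕ) (U : Finset ℕ) :
    (U ∩ (Finset.range m).image (fun r => 2 * r + 1)).card
      = ∑ r ∈ Finset.range m, if 2*r+1 ∈ U then 1 else 0 := by
  classical
  have heq : U ∩ (Finset.range m).image (fun r => 2 * r + 1)
      = ((Finset.range m).filter (fun r => 2*r+1 ∈ U)).image (fun r => 2*r+1) := by
    ext x
    simp only [Finset.mem_inter, Finset.mem_image, Finset.mem_filter, Finset.mem_range]
    constructor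
    · rintro ⟨hxU, r, hr, rfl⟩
      exact ⟨r, ⟨hr, hxU⟩, rfl⟩
    · rintro ⟨r, ⟨hr, hrU⟩, rfl⟩
      exact ⟨hrU, r, hr, rfl⟩
  rw [heq, Finset.card_image_of_injOn (fun a _ b _ h => by omega), Finset.card_filter]

/-- f_T^{m,ℓ} = Σ_{S ⊆ {1,…,n}} g_T^{m,ℓ}(S) · f_S, pointwise on subsets
U ⊆ {1,…,n}. -/
theorem fT_eq_sum_gT_fS (n m ℓ : ℕ) (hm : 2 * m ≤ n) (hℓ : ℓ ≤ n - 2 * m)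
    (U : Finset ℕ) (hU : U ⊆ Finset.Icc 1 n) :
    fT n m ℓ U = ∑ S ∈ (Finset.Icc 1 n).powerset, gT n m ℓ S * fSvec S U := by
  classical
  rw [burnAux_reindex n m ℓ hm U, Finset.sum_comm]
  by_cases hpc : ∀ r ∈ Finset.Icc 1 m, ((2 * r - 1 ∈ U) ↔ ¬(2 * r ∈ U))
  · -- pair condition holds for U
    have hsum1 : ∀ r < m,
        (if 2*r+1 ∈ U then 1 else 0) + (if 2*r+2 ∈ U then 1 else 0) = 1 := by
      intro r hr
      have h := hpc (r+1) (Finset.mem_Icc.2 (by omega))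
      rw [show 2*(r+1) - 1 = 2*r+1 from by omega, show 2*(r+1) = 2*r+2 from by omega] at h
      by_cases h1 : 2*r+1 ∈ U <;> by_cases h2 : 2*r+2 ∈ U <;> simp [h1, h2] at h ⊢
    set sv := ∑ r ∈ Finset.range m, (if 2*r+2 ∈ U then 1 else 0) with hsv
    have hinner : ∀ R ∈ (Finset.Icc (2*m+1) n).powersetCard ℓ,
        (∑ T ∈ (Finset.range m).powerset,
          (-1 : ℝ) ^ T.card *
            ((-1 : ℝ) ^ ((∑ r ∈ Finset.range m,
                  if r ∈ T then (if 2*r+1 ∈ U then 1 else 0)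
                  else (if 2*r+2 ∈ U then 1 else 0)) + (R ∩ U).card) *
              ((m + ℓ).choose ((∑ r ∈ Finset.range m,
                  if r ∈ T then (if 2*r+1 ∈ U then 1 else 0)
                  else (if 2*r+2 ∈ U then 1 else 0)) + (R ∩ U).card))))
        = (-1 : ℝ) ^ (sv + (R ∩ U).card) * ((m + ℓ + m).choose ((R ∩ U).card + m)) := by
      intro R _
      have hp := burnAux_pair (fun r => if 2*r+1 ∈ U then 1 else 0)
        (fun r => if 2*r+2 ∈ U then 1 else 0) m (m + ℓ) ((R ∩ U).card) hsum1
      rw [← hp]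
      apply Finset.sum_congr rfl
      intro T _
      rw [pow_add, pow_add]
      ring
    rw [Finset.sum_congr rfl hinner]
    -- replace R ∩ U by R ∩ W
    set W := U ∩ Finset.Icc (2*m+1) n with hW
    set i := W.card with hi
    have hRUW : ∀ R ∈ (Finset.Icc (2*m+1) n).powersetCard ℓ, R ∩ U = R ∩ W := by
      intro R hR
      have hRD := Finset.mem_powersetCard.1 hR |>.1
      ext x
      simp only [hW, Finset.mem_inter]
      constructor
      · intro ⟨h1, h2⟩; exact ⟨h1, h2, hRD h1⟩
      · intro ⟨h1, h2, _⟩; exact ⟨h1, h2⟩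
    rw [Finset.sum_congr rfl (fun R hR => by rw [hRUW R hR])]
    have hmaps : ∀ R ∈ (Finset.Icc (2*m+1) n).powersetCard ℓ,
        (R ∩ W).card ∈ Finset.range (i + 1) := by
      intro R _
      rw [Finset.mem_range]
      have := Finset.card_le_card (Finset.inter_subset_right : R ∩ W ⊆ W)
      omega
    rw [← Finset.sum_fiberwise_of_maps_to hmaps]
    -- inner sums are constant on fibers
    have hconst : ∀ j ∈ Finset.range (i+1),
        (∑ R ∈ (Finset.Icc (2*m+1) n).powersetCard ℓ with (R ∩ W).card = j,
          (-1 : ℝ) ^ (sv + (R ∩ W).card) * ((m + ℓ + m).choose ((R ∩ W).card + m)))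
        = (((Finset.Icc (2*m+1) n).powersetCard ℓ).filter (fun R => (R ∩ W).card = j)).card
            * ((-1 : ℝ) ^ (sv + j) * ((m + ℓ + m).choose (j + m))) := by
      intro j _
      rw [Finset.sum_congr rfl (fun R hR => by rw [(Finset.mem_filter.1 hR).2]),
        Finset.sum_const, nsmul_eq_mul]
    rw [Finset.sum_congr rfl hconst]
    -- compute the left side
    have hDcard : (Finset.Icc (2*m+1) n).card = n - 2*m := by
      rw [Nat.card_Icc]; omega
    have hile : i ≤ n - 2*m := by
      have h := Finset.card_le_card
        (Finset.inter_subset_right : U ∩ Finset.Icc (2*m+1) n ⊆ Finset.Icc (2*m+1) n)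
      rw [← hW] at h
      omega
    have hLHS : fT n m ℓ U = Tcoef n m ℓ i * (-1 : ℝ) ^
        ((U ∩ (Finset.range m).image (fun r => 2 * r + 1)).card) := by
      rw [fT]
      rw [Finset.sum_eq_single i]
      · rw [gT, if_pos ⟨hpc, rfl⟩]
      · intro i' _ hi'
        rw [gT, if_neg, mul_zero]
        rintro ⟨_, h2⟩
        apply hi'
        rw [← h2, hi]
      · intro hnot
        exact absurd (Finset.mem_range.2 (by omega)) hnot
    rw [hLHS, Tcoef, Finset.sum_mul]
    apply Finset.sum_congr rfl
    intro j hj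
    have hji : j ≤ i := by have := Finset.mem_range.1 hj; omega
    by_cases hjl : j ≤ ℓ
    · rw [if_pos hjl, burnAux_fiber_card (Finset.Icc (2*m+1) n) W
        Finset.inter_subset_right ℓ j hjl, hDcard, ← hi]
      -- sign bookkeeping
      have ho : (U ∩ (Finset.range m).image (fun r => 2 * r + 1)).card
          = ∑ r ∈ Finset.range m, if 2*r+1 ∈ U then 1 else 0 := cap_odd_card m U
      set o := (U ∩ (Finset.range m).image (fun r => 2 * r + 1)).card with hodef
      have hm' : (∑ r ∈ Finset.range m, if 2*r+1 ∈ U then 1 else 0) + sv = m := by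
        rw [hsv, ← Finset.sum_add_distrib]
        rw [Finset.sum_congr rfl (fun r hr => hsum1 r (Finset.mem_range.1 hr))]
        simp
      have hsign : (-1 : ℝ) ^ (sv + j) = (-1) ^ o * (-1) ^ (m + j) := by
        symm
        calc (-1 : ℝ) ^ o * (-1) ^ (m + j) = (-1) ^ (o + (m + j)) := (pow_add _ _ _).symm
          _ = (-1) ^ ((sv + j) + 2*o) := by rw [show o + (m + j) = (sv + j) + 2*o from by omega]
          _ = (-1) ^ (sv + j) * ((-1) ^ 2) ^ o := by rw [pow_add, pow_mul]
          _ = (-1) ^ (sv + j) := by norm_num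
      rw [hsign]
      have e1 : m + ℓ + m = 2*m + ℓ := by ring
      have e2 : j + m = m + j := by ring
      rw [e1, e2]
      push_cast
      ring
    · rw [if_neg hjl, Finset.filter_false_of_mem, Finset.card_empty]
      · norm_num
      · intro R hR
        have hRc := (Finset.mem_powersetCard.1 hR).2
        have : (R ∩ W).card ≤ R.card :=
          Finset.card_le_card Finset.inter_subset_left
        omega
  · -- pair condition fails for U
    have hLHS : fT n m ℓ U = 0 := by
      rw [fT]
      apply Finset.sum_eq_zero
      intro i' _
      rw [gT, if_neg, mul_zero]
      rintro ⟨h1, _⟩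
      exact hpc h1
    rw [hLHS]
    symm
    apply Finset.sum_eq_zero
    intro R _
    simp only [not_forall] at hpc
    obtain ⟨r, hrI, hne⟩ := hpc
    have hrm : r - 1 < m := by
      have := Finset.mem_Icc.1 hrI; omega
    have huv : (if 2*(r-1)+1 ∈ U then 1 else 0) = (if 2*(r-1)+2 ∈ U then 1 else 0) := by
      rw [show 2*(r-1)+1 = 2*r - 1 from by have := Finset.mem_Icc.1 hrI; omega,
        show 2*(r-1)+2 = 2*r from by have := Finset.mem_Icc.1 hrI; omega]
      by_cases h1 : 2*r - 1 ∈ U <;> by_cases h2 : 2*r ∈ U <;> simp [h1, h2] at hne ⊢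
    exact burnAux_vanish (fun r => if 2*r+1 ∈ U then 1 else 0)
      (fun r => if 2*r+2 ∈ U then 1 else 0) (Finset.range m)
      (fun c => (-1 : ℝ) ^ (c + (R ∩ U).card) *
        ((m + ℓ).choose (c + (R ∩ U).card))) (r-1)
      (Finset.mem_range.2 hrm) huv
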